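/- arXiv:1302.5536 — 6 statements merged into one kernel-verified Lean document; each statement's English description precedes it below -/
import Mathlib

section
/- Define τ : ℂ × ℂ → ℝ by τ(z,w) = √(|z-w|·|z-conj(w)|). Then τ is a pseudo-metric on ℂ: it is nonnegative, symmetric, satisfies τ(z,z)=0, and satisfies the triangle inequality τ(z,w) ≤ τ(z,y) + τ(y,w) for all z,y,w ∈ ℂ. -/
private lemma cassini_key_half (A B C D T : ℝ) (hA : 0 ≤ A) (hB : 0 ≤ B)
    (hC : 0 ≤ C) (hD : 0 ≤ D)
    (hle : A + C ≤ B + D)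
    (h1 : T ≤ (A + C) * (B + C)) (h3 : T ≤ (A + C) * (A + D)) :
    T ≤ (Real.sqrt (A * B) + Real.sqrt (C * D)) ^ 2 := by
  set s := Real.sqrt (A * B * (C * D)) with hs_def
  have hABCD : 0 ≤ A * B * (C * D) := by positivity
  have hs2 : s ^ 2 = A * B * (C * D) := Real.sq_sqrt hABCD
  have hs0 : 0 ≤ s := Real.sqrt_nonneg _
  have hprod : Real.sqrt (A * B) * Real.sqrt (C * D) = s := by
    rw [hs_def, ← Real.sqrt_mul (by positivity)]
  have hexp : (Real.sqrt (A * B) + Real.sqrt (C * D)) ^ 2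
      = A * B + C * D + 2 * s := by
    have h1' : Real.sqrt (A * B) ^ 2 = A * B := Real.sq_sqrt (by positivity)
    have h2' : Real.sqrt (C * D) ^ 2 = C * D := Real.sq_sqrt (by positivity)
    nlinarith [hprod, h1', h2']
  rw [hexp]
  rcases le_total (B * C) (A * D) with h | h
  · have hBCs : B * C ≤ s := by nlinarith [mul_nonneg hB hC]
    nlinarith [h1, mul_nonneg hC (sub_nonneg.mpr hle)]
  · have hADs : A * D ≤ s := by nlinarith [mul_nonneg hA hD]
    nlinarith [h3, mul_nonneg hA (sub_nonneg.mpr hle)]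

private lemma cassini_key (A B C D T : ℝ) (hA : 0 ≤ A) (hB : 0 ≤ B)
    (hC : 0 ≤ C) (hD : 0 ≤ D) (_hT : 0 ≤ T)
    (h1 : T ≤ (A + C) * (B + C)) (h2 : T ≤ (B + D) * (A + D))
    (h3 : T ≤ (A + C) * (A + D)) (h4 : T ≤ (B + D) * (B + C)) :
    Real.sqrt T ≤ Real.sqrt (A * B) + Real.sqrt (C * D) := by
  have key : T ≤ (Real.sqrt (A * B) + Real.sqrt (C * D)) ^ 2 := by
    rcases le_total (A + C) (B + D) with hle | hle
    · exact cassini_key_half A B C D T hA hB hC hD hle h1 h3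
    · have := cassini_key_half B A D C T hB hA hD hC hle
        (by linarith [h2]) (by linarith [h4])
      calc T ≤ (Real.sqrt (B * A) + Real.sqrt (D * C)) ^ 2 := this
        _ = (Real.sqrt (A * B) + Real.sqrt (C * D)) ^ 2 := by
          rw [mul_comm B A, mul_comm D C]
  calc Real.sqrt T ≤ Real.sqrt ((Real.sqrt (A * B) + Real.sqrt (C * D)) ^ 2) :=
        Real.sqrt_le_sqrt key
    _ = Real.sqrt (A * B) + Real.sqrt (C * D) :=
        Real.sqrt_sq (by positivity)

/-- The Cassini pseudo-metric on `ℂ`: `τ(z,w) = √(|z-w|·|z-conj w|)`. -/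
noncomputable def tau (z w : ℂ) : ℝ :=
  Real.sqrt (‖z - w‖ * ‖z - (starRingEnd ℂ) w‖)

/-- `τ` is a pseudo-metric on `ℂ`: nonnegative, symmetric, vanishing on the
diagonal, and satisfying the triangle inequality. -/
theorem tau_is_pseudometric :
    (∀ z w : ℂ, 0 ≤ tau z w) ∧
    (∀ z w : ℂ, tau z w = tau w z) ∧
    (∀ z : ℂ, tau z z = 0) ∧
    (∀ z y w : ℂ, tau z w ≤ tau z y + tau y w) := by
  refine ⟨fun z w => Real.sqrt_nonneg _, ?_, ?_, ?_⟩
  · intro z w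
    unfold tau
    congr 1
    have e1 : ‖z - w‖ = ‖w - z‖ := by
      rw [← norm_neg]; congr 1; ring
    have e2 : ‖z - (starRingEnd ℂ) w‖
        = ‖w - (starRingEnd ℂ) z‖ := by
      have h : (starRingEnd ℂ) (z - (starRingEnd ℂ) w) = -(w - (starRingEnd ℂ) z) := by
        rw [map_sub]; simp
      rw [← Complex.norm_conj (z - (starRingEnd ℂ) w), h, norm_neg]
    rw [e1, e2]
  · intro z
    unfold tau
    simp
  · intro z y w
    unfold tau
    set A := ‖z - y‖ with hA_def
    set B := ‖z - (starRingEnd ℂ) y‖ with hB_def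
    set C := ‖y - w‖ with hC_def
    set D := ‖y - (starRingEnd ℂ) w‖ with hD_def
    have hCbar : ‖(starRingEnd ℂ) y - (starRingEnd ℂ) w‖ = C := by
      rw [← map_sub, Complex.norm_conj]
    have hDbar : ‖(starRingEnd ℂ) y - w‖ = D := by
      have : (starRingEnd ℂ) y - w = (starRingEnd ℂ) (y - (starRingEnd ℂ) w) := by
        simp [map_sub]
      rw [this, Complex.norm_conj]
    have hzw1 : ‖z - w‖ ≤ A + C := by
      calc ‖z - w‖ = ‖(z - y) + (y - w)‖ := by ring_nf
        _ ≤ A + C := norm_add_le _ _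
    have hzw2 : ‖z - w‖ ≤ B + D := by
      calc ‖z - w‖
          = ‖(z - (starRingEnd ℂ) y) + ((starRingEnd ℂ) y - w)‖ := by ring_nf
        _ ≤ B + ‖(starRingEnd ℂ) y - w‖ := norm_add_le _ _
        _ = B + D := by rw [hDbar]
    have hzwb1 : ‖z - (starRingEnd ℂ) w‖ ≤ B + C := by
      calc ‖z - (starRingEnd ℂ) w‖
          = ‖(z - (starRingEnd ℂ) y)
              + ((starRingEnd ℂ) y - (starRingEnd ℂ) w)‖ := by ring_nf
        _ ≤ B + ‖(starRingEnd ℂ) y - (starRingEnd ℂ) w‖ :=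
            norm_add_le _ _
        _ = B + C := by rw [hCbar]
    have hzwb2 : ‖z - (starRingEnd ℂ) w‖ ≤ A + D := by
      calc ‖z - (starRingEnd ℂ) w‖
          = ‖(z - y) + (y - (starRingEnd ℂ) w)‖ := by ring_nf
        _ ≤ A + D := norm_add_le _ _
    have h0zw : (0:ℝ) ≤ ‖z - w‖ := norm_nonneg _
    have h0zwb : (0:ℝ) ≤ ‖z - (starRingEnd ℂ) w‖ := norm_nonneg _
    have hA : (0:ℝ) ≤ A := norm_nonneg _
    have hB : (0:ℝ) ≤ B := norm_nonneg _
    have hC : (0:ℝ) ≤ C := norm_nonneg _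
    have hD : (0:ℝ) ≤ D := norm_nonneg _
    exact cassini_key A B C D _ hA hB hC hD (by positivity)
      (mul_le_mul hzw1 hzwb1 h0zwb (by positivity))
      (mul_le_mul hzw2 hzwb2 h0zwb (by positivity))
      (mul_le_mul hzw1 hzwb2 h0zwb (by positivity))
      (mul_le_mul hzw2 hzwb1 h0zwb (by positivity))
end

section
/- For all z, w ∈ ℂ, √(|Δ_w(z)| + (Im w)²) − |Im w| ≤ |z − w| ≤ √(|Δ_w(z)| + (Im w)²) + |Im w|, where Δ_w(z) = (z−w)(z−conj(w)). -/
/-- The characteristic polynomial `Δ_w(z) = (z-w)(z-conj w)`. -/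
noncomputable def Delta (w z : ℂ) : ℂ := (z - w) * (z - (starRingEnd ℂ) w)

/-- For all `z, w ∈ ℂ`,
`√(|Δ_w(z)| + (Im w)²) − |Im w| ≤ |z − w| ≤ √(|Δ_w(z)| + (Im w)²) + |Im w|`. -/
theorem abs_sub_bounds_via_Delta (z w : ℂ) :
    Real.sqrt (‖Delta w z‖ + w.im ^ 2) - |w.im| ≤ ‖z - w‖ ∧
    ‖z - w‖ ≤ Real.sqrt (‖Delta w z‖ + w.im ^ 2) + |w.im| := by
  set a := ‖z - w‖ with ha
  set b := ‖z - (starRingEnd ℂ) w‖ with hb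
  set m := |w.im| with hm
  have ha0 : 0 ≤ a := norm_nonneg _
  have hb0 : 0 ≤ b := norm_nonneg _
  have hm0 : 0 ≤ m := abs_nonneg _
  have hD : ‖Delta w z‖ = a * b := by
    rw [Delta, norm_mul]
  have hwc : ‖w - (starRingEnd ℂ) w‖ = 2 * m := by
    rw [Complex.sub_conj]
    simp [Complex.norm_real, abs_mul, mul_assoc, hm]
  have hba : b ≤ a + 2 * m := by
    have h := norm_add_le (z - w) (w - (starRingEnd ℂ) w)
    rw [show z - w + (w - (starRingEnd ℂ) w) = z - (starRingEnd ℂ) w by ring, hwc] at h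
    exact h
  have hab : a ≤ b + 2 * m := by
    have h := norm_add_le (z - (starRingEnd ℂ) w) ((starRingEnd ℂ) w - w)
    rw [show z - (starRingEnd ℂ) w + ((starRingEnd ℂ) w - w) = z - w by ring,
      show (starRingEnd ℂ) w - w = -(w - (starRingEnd ℂ) w) by ring, norm_neg, hwc] at h
    exact h
  have hm2 : w.im ^ 2 = m ^ 2 := (sq_abs _).symm
  rw [hD, hm2]
  constructor
  · -- sqrt(ab + m²) ≤ a + m
    have h1 : a * b + m ^ 2 ≤ (a + m) ^ 2 := by nlinarith
    have := Real.sqrt_le_sqrt h1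
    rw [Real.sqrt_sq (by positivity)] at this
    linarith
  · -- a - m ≤ sqrt(ab + m²)
    rcases le_or_gt a m with h | h
    · have : 0 ≤ Real.sqrt (a * b + m ^ 2) := Real.sqrt_nonneg _
      linarith
    · have h1 : (a - m) ^ 2 ≤ a * b + m ^ 2 := by nlinarith
      have h2 : a - m ≤ Real.sqrt (a * b + m ^ 2) := by
        rw [show a - m = Real.sqrt ((a - m) ^ 2) from
          (Real.sqrt_sq (by linarith)).symm]
        exact Real.sqrt_le_sqrt h1
      linarith
end

section
/- Let w ∈ ℂ \ ℝ. For each n, ℓ ∈ ℕ, the n-th complex derivative of the spherical polynomial S_{w,ℓ} evaluated at w equals n! · e_{2n,ℓ} · (2i·Im w)^{ℓ−n}, where the integers e_{n,ℓ} are defined by: e_{2m,2k} = e_{2m+1,2k} = C(k, m−k), e_{2m,2k+1} = C(k, m−k−1), e_{2m+1,2k+1} = −C(k+1, m−k) (with binomial coefficient C(a,b) = 0 when b < 0 or b > a). -/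
/-- The complex spherical polynomials: `S_{w,2m}(z) = Δ_w(z)^m`,
`S_{w,2m+1}(z) = Δ_w(z)^m (z−w)`. -/
noncomputable def Sph (w : ℂ) (n : ℕ) (z : ℂ) : ℂ :=
  Delta w z ^ (n / 2) * (if n % 2 = 1 then z - w else 1)

/-- The spherical matrix: `e_{2m,2k} = e_{2m+1,2k} = C(k, m−k)`,
`e_{2m,2k+1} = C(k, m−k−1)`, `e_{2m+1,2k+1} = −C(k+1, m−k)`, with the
convention that `C(a,b) = 0` if `b < 0` or `b > a`. -/
def sphE (n l : ℕ) : ℤ :=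
  let m := n / 2
  let k := l / 2
  if n % 2 = 0 then
    if l % 2 = 0 then (if k ≤ m then (Nat.choose k (m - k) : ℤ) else 0)
    else (if k + 1 ≤ m then (Nat.choose k (m - k - 1) : ℤ) else 0)
  else
    if l % 2 = 0 then (if k ≤ m then (Nat.choose k (m - k) : ℤ) else 0)
    else (if k ≤ m then -(Nat.choose (k + 1) (m - k) : ℤ) else 0)

open Polynomial Finset

lemma iteratedDeriv_poly (p : Polynomial ℂ) (n : ℕ) :
    iteratedDeriv n (fun z => p.eval z) = fun z => (Polynomial.derivative^[n] p).eval z := by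
  induction n with
  | zero => simp
  | succ n ih =>
    rw [iteratedDeriv_succ, ih, Function.iterate_succ_apply']
    funext z
    exact Polynomial.deriv _

lemma sph_eq_poly (w : ℂ) (l : ℕ) :
    Sph w l = fun z =>
      (∑ j ∈ Finset.range (l / 2 + 1),
        Polynomial.C ((Nat.choose (l/2) j : ℂ) * (w - (starRingEnd ℂ) w)^j)
          * (Polynomial.X - Polynomial.C w) ^ (l - j)).eval z := by
  funext z
  set δ := w - (starRingEnd ℂ) w
  set k := l / 2
  have hz : z - (starRingEnd ℂ) w = δ + (z - w) := by ring
  simp only [Sph, Delta, eval_finset_sum, eval_mul, eval_pow, eval_sub, eval_C, eval_X]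
  rw [mul_pow, hz, add_pow, Finset.mul_sum, Finset.sum_mul]
  apply Finset.sum_congr rfl
  intro j hj
  have hjk : j ≤ k := Nat.lt_succ_iff.mp (Finset.mem_range.mp hj)
  have he : l - j = (k - j) + (k + l % 2) := by omega
  rw [he, pow_add]
  rcases Nat.mod_two_eq_zero_or_one l with h | h <;> simp [h] <;> ring

/-- For `w ∉ ℝ`, the `n`-th complex derivative of `S_{w,ℓ}` at `w` equals
`n! · e_{2n,ℓ} · (2i·Im w)^{ℓ−n}`. -/
theorem iteratedDeriv_sph_at_w (w : ℂ) (hw : w.im ≠ 0) (n l : ℕ) :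
    iteratedDeriv n (Sph w l) w
      = (Nat.factorial n : ℂ) * (sphE (2 * n) l : ℂ)
          * (2 * Complex.I * (w.im : ℂ)) ^ ((l : ℤ) - (n : ℤ)) := by
  set δ := w - (starRingEnd ℂ) w with hδdef
  set k := l / 2 with hk
  have hkl : 2 * k + l % 2 = l := by omega
  have hδ : (2 * Complex.I * (w.im : ℂ)) = δ := by
    rw [hδdef, Complex.sub_conj]; push_cast; ring
  have key : iteratedDeriv n (Sph w l) w
      = ∑ j ∈ Finset.range (k + 1),
          ((Nat.choose k j : ℂ) * δ ^ j)
            * ((Nat.descFactorial (l - j) n : ℂ) * (0 : ℂ) ^ (l - j - n)) := by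
    rw [sph_eq_poly, iteratedDeriv_poly, iterate_derivative_sum]
    simp only [iterate_derivative_C_mul, iterate_derivative_X_sub_pow, eval_finset_sum,
      eval_mul, eval_C, eval_smul, eval_pow, eval_sub, eval_X, sub_self, nsmul_eq_mul, eval_natCast]
    rfl
  have hE : sphE (2 * n) l
      = if l % 2 = 0 then (if k ≤ n then (Nat.choose k (n - k) : ℤ) else 0)
        else (if k + 1 ≤ n then (Nat.choose k (n - k - 1) : ℤ) else 0) := by
    simp [sphE, Nat.mul_div_cancel_left, Nat.mul_mod_right, hk]
  by_cases hnl : n ≤ l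
  · have hzpow : (2 * Complex.I * (w.im : ℂ)) ^ ((l : ℤ) - (n : ℤ)) = δ ^ (l - n) := by
      rw [hδ, show (l : ℤ) - (n : ℤ) = ((l - n : ℕ) : ℤ) by omega, zpow_natCast]
    rw [hzpow]
    by_cases hkn : l - n ≤ k
    · have hc : ((Nat.choose k (l - n) : ℕ) : ℤ) = sphE (2 * n) l := by
        rw [hE]
        rcases Nat.mod_two_eq_zero_or_one l with h | h
        · rw [h, if_pos rfl, if_pos (by omega), show l - n = k - (n - k) by omega,
            Nat.choose_symm (by omega)]
        · rw [h, if_neg one_ne_zero, if_pos (by omega), show l - n = k - (n - k - 1) by omega,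
            Nat.choose_symm (by omega)]
      rw [key, Finset.sum_eq_single (l - n)]
      · rw [show l - (l - n) = n by omega, Nat.sub_self, pow_zero, Nat.descFactorial_self, ← hc]
        push_cast
        ring
      · intro j hj hne
        have hjk : j ≤ k := Nat.lt_succ_iff.mp (Finset.mem_range.mp hj)
        rcases Nat.lt_or_ge n (l - j) with h2 | h2
        · rw [zero_pow (by omega), mul_zero, mul_zero]
        · rw [Nat.descFactorial_eq_zero_iff_lt.mpr (by omega), Nat.cast_zero, zero_mul, mul_zero]
      · intro h
        exact absurd (Finset.mem_range.mpr (by omega)) h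
    · have hE0 : sphE (2 * n) l = 0 := by
        rw [hE]
        rcases Nat.mod_two_eq_zero_or_one l with h | h
        · rw [h, if_pos rfl, if_neg (by omega)]
        · rw [h, if_neg one_ne_zero, if_neg (by omega)]
      rw [key, Finset.sum_eq_zero, hE0]
      · simp
      · intro j hj
        have hjk : j ≤ k := Nat.lt_succ_iff.mp (Finset.mem_range.mp hj)
        rw [zero_pow (by omega), mul_zero, mul_zero]
  · have hE0 : sphE (2 * n) l = 0 := by
      rw [hE]
      rcases Nat.mod_two_eq_zero_or_one l with h | h
      · rw [h, if_pos rfl, if_pos (by omega), Nat.choose_eq_zero_of_lt (by omega), Nat.cast_zero]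
      · rw [h, if_neg one_ne_zero, if_pos (by omega), Nat.choose_eq_zero_of_lt (by omega),
          Nat.cast_zero]
    rw [key, Finset.sum_eq_zero, hE0]
    · simp
    · intro j hj
      have hjk : j ≤ k := Nat.lt_succ_iff.mp (Finset.mem_range.mp hj)
      rw [Nat.descFactorial_eq_zero_iff_lt.mpr (by omega), Nat.cast_zero, zero_mul, mul_zero]
end

section
/- Let w ∈ ℂ \ ℝ. For each n, ℓ ∈ ℕ, the n-th complex derivative of S_{w,ℓ} evaluated at conj(w) equals n! · (−1)^ℓ · e_{2n+1,ℓ} · (−2i·Im w)^{ℓ−n}, where e_{n,ℓ} is the spherical matrix: e_{2m,2k} = e_{2m+1,2k} = C(k, m−k), e_{2m,2k+1} = C(k, m−k−1), e_{2m+1,2k+1} = −C(k+1, m−k). -/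
open Polynomial in
lemma my_iteratedDeriv_poly (p : Polynomial ℂ) (n : ℕ) :
    iteratedDeriv n (fun z => p.eval z) = fun z => (derivative^[n] p).eval z := by
  induction n with
  | zero => simp
  | succ n ih =>
    rw [iteratedDeriv_succ, ih]
    funext x
    rw [Function.iterate_succ_apply']
    exact Polynomial.deriv (𝕜 := ℂ) (p := Polynomial.derivative^[n] p)

open Polynomial in
lemma my_iteratedDeriv_poly_zero (p : Polynomial ℂ) (n : ℕ) :
    iteratedDeriv n (fun z => p.eval z) 0 = (n.factorial : ℂ) * p.coeff n := by
  rw [my_iteratedDeriv_poly]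
  show (derivative^[n] p).eval 0 = _
  rw [← coeff_zero_eq_eval_zero, coeff_iterate_derivative]
  simp [Nat.descFactorial_self, nsmul_eq_mul]

open Polynomial in
lemma my_iteratedDeriv_shift (q : Polynomial ℂ) (c : ℂ) (n : ℕ) :
    iteratedDeriv n (fun z => q.eval (z - c)) c = (n.factorial : ℂ) * q.coeff n := by
  have h : (fun z : ℂ => q.eval (z - c)) = fun z => (fun y => q.eval y) (z + (-c)) := by
    funext z; rw [sub_eq_add_neg]
  rw [h]
  have h2 := congrFun (iteratedDeriv_comp_add_const n (fun y => q.eval y) (-c)) c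
  rw [h2]
  simpa using my_iteratedDeriv_poly_zero q n

lemma sphE_oe (n k : ℕ) :
    sphE (2*n+1) (2*k) = if k ≤ n then (Nat.choose k (n-k) : ℤ) else 0 := by
  have h1 : (2*n+1)/2 = n := by omega
  have h2 : (2*n+1)%2 = 1 := by omega
  have h3 : (2*k)/2 = k := by omega
  have h4 : (2*k)%2 = 0 := by omega
  simp [sphE, h1, h2, h3, h4]

lemma sphE_oo (n k : ℕ) :
    sphE (2*n+1) (2*k+1) = if k ≤ n then -(Nat.choose (k+1) (n-k) : ℤ) else 0 := by
  have h1 : (2*n+1)/2 = n := by omega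
  have h2 : (2*n+1)%2 = 1 := by omega
  have h3 : (2*k+1)/2 = k := by omega
  have h4 : (2*k+1)%2 = 1 := by omega
  simp [sphE, h1, h2, h3, h4]

/-- For `w ∉ ℝ`, the `n`-th complex derivative of `S_{w,ℓ}` at `conj w` equals
`n! · (−1)^ℓ · e_{2n+1,ℓ} · (−2i·Im w)^{ℓ−n}`. -/
theorem iteratedDeriv_sph_at_conj (w : ℂ) (hw : w.im ≠ 0) (n l : ℕ) :
    iteratedDeriv n (Sph w l) ((starRingEnd ℂ) w)
      = (Nat.factorial n : ℂ) * (-1 : ℂ) ^ l * (sphE (2 * n + 1) l : ℂ)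
          * (-(2 * Complex.I * (w.im : ℂ))) ^ ((l : ℤ) - (n : ℤ)) := by
  set c : ℂ := (starRingEnd ℂ) w with hc
  set d : ℂ := c - w with hd
  have hdval : -(2 * Complex.I * (w.im : ℂ)) = d := by
    rw [hd, hc]
    have := Complex.sub_conj w
    -- w - conj w = 2 * im * I
    have h2 : (starRingEnd ℂ) w - w = -(w - (starRingEnd ℂ) w) := by ring
    rw [h2, this]; push_cast; ring
  rw [hdval]
  obtain ⟨k, rfl | rfl⟩ := Nat.even_or_odd' l
  · -- even case, l = 2k
    have hS : Sph w (2*k) = fun z =>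
        (Polynomial.X ^ k * (Polynomial.X + Polynomial.C d) ^ k).eval (z - c) := by
      funext z
      have h1 : (2*k)/2 = k := by omega
      have h2 : (2*k)%2 = 0 := by omega
      simp only [Sph, Delta, h1, h2, Polynomial.eval_mul, Polynomial.eval_pow,
        Polynomial.eval_add, Polynomial.eval_X, Polynomial.eval_C, mul_pow]
      rw [hd]
      norm_num
      ring
    rw [hS, my_iteratedDeriv_shift, Polynomial.coeff_X_pow_mul',
      Polynomial.coeff_X_add_C_pow, sphE_oe]
    by_cases hkn : k ≤ n
    · by_cases hn2k : n ≤ 2*k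
      · have he : k - (n - k) = 2*k - n := by omega
        have hz : ((2*k : ℕ) : ℤ) - (n : ℤ) = ((2*k - n : ℕ) : ℤ) := by
          push_cast; omega
        rw [if_pos hkn, if_pos hkn, he, hz, zpow_natCast]
        have hm1 : (-1 : ℂ) ^ (2*k) = 1 := by
          rw [pow_mul]; norm_num
        push_cast [hm1]
        ring
      · have hch : Nat.choose k (n - k) = 0 :=
          Nat.choose_eq_zero_of_lt (by omega)
        rw [if_pos hkn, if_pos hkn, hch]
        push_cast
        ring
    · rw [if_neg hkn, if_neg hkn]
      push_cast
      ring
  · -- odd case, l = 2k+1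
    have hS : Sph w (2*k+1) = fun z =>
        (Polynomial.X ^ k * (Polynomial.X + Polynomial.C d) ^ (k+1)).eval (z - c) := by
      funext z
      have h1 : (2*k+1)/2 = k := by omega
      have h2 : (2*k+1)%2 = 1 := by omega
      simp only [Sph, Delta, h1, h2, Polynomial.eval_mul, Polynomial.eval_pow,
        Polynomial.eval_add, Polynomial.eval_X, Polynomial.eval_C, mul_pow, if_pos rfl]
      rw [hd]
      norm_num
      ring
    rw [hS, my_iteratedDeriv_shift, Polynomial.coeff_X_pow_mul',
      Polynomial.coeff_X_add_C_pow, sphE_oo]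
    by_cases hkn : k ≤ n
    · by_cases hn2k : n ≤ 2*k+1
      · have he : (k+1) - (n - k) = 2*k+1 - n := by omega
        have hz : ((2*k+1 : ℕ) : ℤ) - (n : ℤ) = ((2*k+1 - n : ℕ) : ℤ) := by
          push_cast; omega
        rw [if_pos hkn, if_pos hkn, he, hz, zpow_natCast]
        have hm1 : (-1 : ℂ) ^ (2*k+1) = -1 := by
          rw [pow_succ, pow_mul]; norm_num
        push_cast [hm1]
        ring
      · have hch : Nat.choose (k+1) (n - k) = 0 :=
          Nat.choose_eq_zero_of_lt (by omega)
        rw [if_pos hkn, if_pos hkn, hch]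
        push_cast
        ring
    · rw [if_neg hkn, if_neg hkn]
      push_cast
      ring
end

section
/- Let w ∈ ℂ \ ℝ and suppose the complex spherical series S(z) = Σ_{n∈ℕ} S_{w,n}(z) s_n (with s_n ∈ ℂ) converges on a Cassini ball U(w,R) = {z : |Δ_w(z)| < R²} with R > 0, defining a holomorphic function S there. Then for each n ∈ ℕ, (1/n!) · S⁽ⁿ⁾(w) = (2i·Im w)^{−n} · Σ_{ℓ=n}^{2n} e_{2n,ℓ} (2i·Im w)^ℓ s_ℓ. -/
/-- Coefficient of `u^k` in `Sph w l (w+u)`, where `d = w - conj w`. -/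
noncomputable def cc (d : ℂ) (k l : ℕ) : ℂ :=
  if l / 2 + l % 2 ≤ k ∧ k ≤ l then
    (Nat.choose (l / 2) (k - l / 2 - l % 2) : ℂ) * d ^ (l - k) else 0

lemma choose_le_two_pow' (m j : ℕ) : Nat.choose m j ≤ 2 ^ m := by
  rcases le_or_gt j m with h | h
  · calc Nat.choose m j ≤ ∑ i ∈ Finset.range (m+1), Nat.choose m i :=
        Finset.single_le_sum (fun i _ => Nat.zero_le _) (Finset.mem_range.mpr (by omega))
      _ = 2^m := Nat.sum_range_choose m
  · rw [Nat.choose_eq_zero_of_lt h]; exact Nat.zero_le _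

lemma expand_pow (d u : ℂ) (m r : ℕ) (hr : r ≤ 1) :
    u ^ (m + r) * (u + d) ^ m
      = ∑ k ∈ Finset.range (2 * m + r + 1), cc d k (2 * m + r) * u ^ k := by
  have h2 : (2 * m + r) / 2 = m := by omega
  have h3 : (2 * m + r) % 2 = r := by omega
  have hRHS : ∑ k ∈ Finset.range (2 * m + r + 1), cc d k (2 * m + r) * u ^ k
      = ∑ k ∈ Finset.Icc (m + r) (2 * m + r),
          (Nat.choose m (k - m - r) : ℂ) * d ^ (2 * m + r - k) * u ^ k := by
    unfold cc
    simp only [h2, h3, ite_mul, zero_mul]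
    rw [← Finset.sum_filter]
    apply Finset.sum_congr
    · ext k
      simp only [Finset.mem_filter, Finset.mem_range, Finset.mem_Icc]
      omega
    · intro k _; rfl
  rw [hRHS]
  have hIcc : Finset.Icc (m + r) (2 * m + r) = Finset.Ico (m + r) (2 * m + r + 1) := by
    rw [Finset.Ico_add_one_right_eq_Icc]
  rw [hIcc, Finset.sum_Ico_eq_sum_range]
  have hcard : 2 * m + r + 1 - (m + r) = m + 1 := by omega
  rw [hcard, add_pow, Finset.mul_sum]
  apply Finset.sum_congr rfl
  intro j hj
  simp only [Finset.mem_range] at hj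
  have h4 : m + r + j - m - r = j := by omega
  have h5 : 2 * m + r - (m + r + j) = m - j := by omega
  rw [h4, h5]
  rw [show m + r + j = (m + r) + j from rfl, pow_add]
  ring

lemma sph_expand (w u : ℂ) (l : ℕ) :
    Sph w l (w + u)
      = ∑ k ∈ Finset.range (l + 1), cc (w - (starRingEnd ℂ) w) k l * u ^ k := by
  set d := w - (starRingEnd ℂ) w with hd
  have hΔ : Delta w (w + u) = u * (u + d) := by unfold Delta; rw [hd]; ring
  have hkey : Sph w l (w + u) = u ^ (l / 2 + l % 2) * (u + d) ^ (l / 2) := by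
    unfold Sph
    rw [hΔ]
    rcases Nat.mod_two_eq_zero_or_one l with h | h <;> rw [h]
    · simp [mul_pow]
    · simp only [mul_pow, pow_add, pow_one, add_sub_cancel_left, eq_self_iff_true, if_true]
      ring
  rw [hkey, expand_pow d u (l / 2) (l % 2) (by omega)]
  have : 2 * (l / 2) + l % 2 = l := by omega
  rw [this]

set_option maxHeartbeats 2000000 in
lemma key_hasSum (w : ℂ) (hw : w.im ≠ 0) (R : ℝ) (hR : 0 < R) (s : ℕ → ℂ) (SF : ℂ → ℂ)
    (hconv : ∀ z : ℂ, ‖Delta w z‖ < R ^ 2 →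
      HasSum (fun n => Sph w n z * s n) (SF z)) :
    ∃ ρ : ℝ, 0 < ρ ∧ ∀ u : ℂ, ‖u‖ < ρ →
      HasSum (fun k =>
          (∑ l ∈ Finset.Icc k (2 * k), cc (w - (starRingEnd ℂ) w) k l * s l) * u ^ k)
        (SF (w + u)) := by
  set d := w - (starRingEnd ℂ) w with hd
  have hΔ : ∀ u : ℂ, Delta w (w + u) = u * (u + d) := by
    intro u; unfold Delta; rw [hd]; ring
  have hdim : d.im = 2 * w.im := by
    rw [hd]; simp [Complex.sub_im, Complex.conj_im]; ring
  have habs : (0:ℝ) < 1 + ‖d‖ := by positivity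
  set x : ℝ := min 1 (R ^ 2 / (2 * (1 + ‖d‖))) with hxdef
  have hx_pos : 0 < x := lt_min one_pos (by positivity)
  have hx1 : x ≤ 1 := min_le_left _ _
  have hx2 : x * (1 + ‖d‖) ≤ R ^ 2 / 2 := by
    have hxr : x ≤ R ^ 2 / (2 * (1 + ‖d‖)) := min_le_right _ _
    calc x * (1 + ‖d‖)
        ≤ R ^ 2 / (2 * (1 + ‖d‖)) * (1 + ‖d‖) := by gcongr
      _ = R ^ 2 / 2 := by field_simp
  have hz0 : ‖(Delta w (w + (x:ℂ)))‖ < R ^ 2 := by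
    rw [hΔ, norm_mul, Complex.norm_of_nonneg hx_pos.le]
    have h1 : ‖(x:ℂ) + d‖ ≤ 1 + ‖d‖ := by
      calc ‖(x:ℂ) + d‖ ≤ ‖(x:ℂ)‖ + ‖d‖ :=
            norm_add_le _ _
        _ ≤ 1 + ‖d‖ := by
            rw [Complex.norm_of_nonneg hx_pos.le]; linarith
    calc x * ‖(x:ℂ) + d‖ ≤ x * (1 + ‖d‖) := by gcongr
      _ ≤ R ^ 2 / 2 := hx2
      _ < R ^ 2 := by nlinarith
  set t : ℝ := ‖(Delta w (w + (x:ℂ)))‖ with htdef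
  have hxd0 : ((x:ℂ) + d) ≠ 0 := by
    intro h
    have h2 := congrArg Complex.im h
    simp only [Complex.add_im, Complex.ofReal_im, Complex.zero_im, hdim, zero_add] at h2
    exact hw (by linarith)
  have ht_pos : 0 < t := by
    rw [htdef, hΔ, norm_mul]
    apply mul_pos
    · rw [Complex.norm_of_nonneg hx_pos.le]; exact hx_pos
    · exact norm_pos_iff.mpr hxd0
  have hSph : ∀ n : ℕ, ‖(Sph w n (w + (x:ℂ)))‖ = t ^ (n / 2) * x ^ (n % 2) := by
    intro n
    unfold Sph
    rw [norm_mul, norm_pow, ← htdef]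
    congr 1
    rcases Nat.mod_two_eq_zero_or_one n with h | h <;> rw [h]
    · simp
    · simp [add_sub_cancel_left, Complex.norm_of_nonneg hx_pos.le, hx_pos.le]
  obtain ⟨C, hCub⟩ := ((hconv _ hz0).summable.tendsto_atTop_zero.norm).bddAbove_range
  have hC : ∀ n, ‖(Sph w n (w + (x:ℂ)) * s n)‖ ≤ C := by
    intro n
    have := hCub (Set.mem_range_self n)
    simpa using this
  have hC0 : 0 ≤ C := le_trans (norm_nonneg _) (hC 0)
  set q : ℝ := min 1 (min t x) with hqdef
  have hq_pos : 0 < q := lt_min one_pos (lt_min ht_pos hx_pos)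
  have hq1 : q ≤ 1 := min_le_left _ _
  have hqt : q ≤ t := le_trans (min_le_right _ _) (min_le_left _ _)
  have hqx : q ≤ x := le_trans (min_le_right _ _) (min_le_right _ _)
  have hs : ∀ n, ‖s n‖ * q ^ n ≤ C := by
    intro n
    have h1 : q ^ n ≤ t ^ (n / 2) * x ^ (n % 2) := by
      calc q ^ n ≤ q ^ (n / 2 + n % 2) :=
            pow_le_pow_of_le_one hq_pos.le hq1 (by omega)
        _ = q ^ (n / 2) * q ^ (n % 2) := pow_add q _ _
        _ ≤ t ^ (n / 2) * x ^ (n % 2) := by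
            gcongr <;> first | exact hq_pos.le | exact hqt | exact hqx
    calc ‖s n‖ * q ^ n
        ≤ ‖s n‖ * (t ^ (n / 2) * x ^ (n % 2)) := by gcongr
      _ = ‖(Sph w n (w + (x:ℂ)) * s n)‖ := by rw [norm_mul, hSph]; ring
      _ ≤ C := hC n
  set M0 : ℝ := max 1 (‖d‖) with hM0def
  have hM1 : 1 ≤ M0 := le_max_left _ _
  have hMd : ‖d‖ ≤ M0 := le_max_right _ _
  have hM0_pos : 0 < M0 := lt_of_lt_of_le one_pos hM1
  set K : ℝ := 2 * M0 / q with hKdef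
  have hK_pos : 0 < K := by positivity
  set σ : ℝ := min (min (1/2) (q / (4 * M0))) x with hσdef
  have hσ_pos : 0 < σ := lt_min (lt_min (by norm_num) (by positivity)) hx_pos
  have hσhalf : σ ≤ 1/2 := le_trans (min_le_left _ _) (min_le_left _ _)
  have hσq : σ ≤ q / (4 * M0) := le_trans (min_le_left _ _) (min_le_right _ _)
  have hσx : σ ≤ x := min_le_right _ _
  have hσ1 : σ ≤ 1 := le_trans hσhalf (by norm_num)
  have hKσ : K * σ ≤ 1/2 := by
    calc K * σ ≤ K * (q / (4 * M0)) := by gcongr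
      _ = 1/2 := by rw [hKdef]; field_simp; ring
  set ρ : ℝ := σ ^ 4 with hρdef
  have hρ_pos : 0 < ρ := by positivity
  have hρσ : ρ ≤ σ := by
    rw [hρdef]
    exact pow_le_of_le_one hσ_pos.le hσ1 (by norm_num)
  refine ⟨ρ, hρ_pos, ?_⟩
  intro u hu
  have hux : ‖u‖ < x := lt_of_lt_of_le hu (le_trans hρσ hσx)
  have hΔu : ‖Delta w (w + u)‖ < R ^ 2 := by
    rw [hΔ, norm_mul]
    have h1 : ‖u + d‖ ≤ 1 + ‖d‖ := by
      calc ‖u + d‖ ≤ ‖u‖ + ‖d‖ := norm_add_le _ _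
        _ ≤ 1 + ‖d‖ := by
            have : ‖u‖ ≤ 1 := le_trans hux.le hx1
            linarith
    calc ‖u‖ * ‖u + d‖
        ≤ ‖u‖ * (1 + ‖d‖) := by gcongr
      _ < x * (1 + ‖d‖) := by
          exact mul_lt_mul_of_pos_right hux habs
      _ ≤ R ^ 2 / 2 := hx2
      _ < R ^ 2 := by nlinarith
  have hgsum : Summable (fun p : ℕ × ℕ => (C * (K * σ) ^ p.1) * σ ^ p.2) :=
    Summable.mul_of_nonneg (f := fun ℓ : ℕ => C * (K * σ) ^ ℓ) (g := fun k : ℕ => σ ^ k)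
      ((summable_geometric_of_lt_one (by positivity) (by linarith)).mul_left C)
      (summable_geometric_of_lt_one hσ_pos.le (by linarith))
      (fun ℓ => by positivity) (fun k => by positivity)
  have hFsum : Summable (fun p : ℕ × ℕ => cc d p.2 p.1 * u ^ p.2 * s p.1) := by
    apply Summable.of_norm_bounded hgsum
    rintro ⟨ℓ, k⟩
    simp only
    by_cases hsupp : ℓ / 2 + ℓ % 2 ≤ k ∧ k ≤ ℓ
    · rw [show cc d k ℓ = (Nat.choose (ℓ/2) (k - ℓ/2 - ℓ%2) : ℂ) * d ^ (ℓ - k) from by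
        unfold cc; rw [if_pos hsupp]]
      have hlk : ℓ + k ≤ 4 * k := by omega
      have hnorm : ‖(Nat.choose (ℓ/2) (k - ℓ/2 - ℓ%2) : ℂ) * d ^ (ℓ - k) * u ^ k * s ℓ‖
          = (Nat.choose (ℓ/2) (k - ℓ/2 - ℓ%2) : ℝ) * ‖d‖ ^ (ℓ - k)
            * ‖u‖ ^ k * ‖s ℓ‖ := by
        simp [norm_mul, norm_pow, Complex.norm_natCast]
      rw [hnorm]
      have target_eq : C * (K * σ) ^ ℓ * σ ^ k
          = (2:ℝ) ^ ℓ * M0 ^ ℓ * (σ ^ ℓ * σ ^ k) * (C / q ^ ℓ) := by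
        have hK : (K * σ) ^ ℓ = 2 ^ ℓ * M0 ^ ℓ * σ ^ ℓ / q ^ ℓ := by
          rw [hKdef, div_mul_eq_mul_div, div_pow]
          congr 1
          rw [mul_pow, mul_pow]
        rw [hK]
        field_simp
      rw [target_eq]
      have e1 : (Nat.choose (ℓ/2) (k - ℓ/2 - ℓ%2) : ℝ) ≤ 2 ^ ℓ := by
        have h := choose_le_two_pow' (ℓ/2) (k - ℓ/2 - ℓ%2)
        calc (Nat.choose (ℓ/2) (k - ℓ/2 - ℓ%2) : ℝ) ≤ ((2:ℕ) ^ (ℓ/2) : ℕ) := by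
              exact_mod_cast h
          _ ≤ 2 ^ ℓ := by
              push_cast
              exact pow_le_pow_right₀ one_le_two (by omega)
      have e2 : ‖d‖ ^ (ℓ - k) ≤ M0 ^ ℓ := by
        calc ‖d‖ ^ (ℓ - k) ≤ M0 ^ (ℓ - k) :=
              pow_le_pow_left₀ (norm_nonneg d) hMd _
          _ ≤ M0 ^ ℓ := pow_le_pow_right₀ hM1 (by omega)
      have e3 : ‖u‖ ^ k ≤ σ ^ ℓ * σ ^ k := by
        calc ‖u‖ ^ k ≤ ρ ^ k :=
              pow_le_pow_left₀ (norm_nonneg u) hu.le k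
          _ = σ ^ (4 * k) := by rw [hρdef, ← pow_mul]
          _ ≤ σ ^ (ℓ + k) := pow_le_pow_of_le_one hσ_pos.le hσ1 hlk
          _ = σ ^ ℓ * σ ^ k := pow_add σ ℓ k
      have e4 : ‖s ℓ‖ ≤ C / q ^ ℓ := by
        rw [le_div_iff₀ (pow_pos hq_pos ℓ)]
        exact hs ℓ
      exact mul_le_mul (mul_le_mul (mul_le_mul e1 e2 (by positivity) (by positivity)) e3
        (by positivity) (by positivity)) e4 (by positivity) (by positivity)
    · rw [show cc d k ℓ = 0 from by unfold cc; rw [if_neg hsupp]]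
      simp only [zero_mul, norm_zero]
      positivity
  obtain ⟨T, hT⟩ := hFsum
  have hrows : ∀ ℓ : ℕ, HasSum (fun k => cc d k ℓ * u ^ k * s ℓ) (Sph w ℓ (w + u) * s ℓ) := by
    intro ℓ
    have hfin : ∀ k ∉ Finset.range (ℓ + 1), cc d k ℓ * u ^ k * s ℓ = 0 := by
      intro k hk
      simp only [Finset.mem_range, not_lt] at hk
      rw [show cc d k ℓ = 0 from by unfold cc; rw [if_neg (by omega)]]
      ring
    have h : HasSum _ _ := hasSum_sum_of_ne_finset_zero hfin
    have hsph := sph_expand w u ℓ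
    rw [← hd] at hsph
    rwa [← Finset.sum_mul, ← hsph] at h
  have hTval : HasSum (fun ℓ => Sph w ℓ (w + u) * s ℓ) T := hT.prod_fiberwise hrows
  have hTSF : T = SF (w + u) := hTval.unique (hconv _ hΔu)
  have hT2 : HasSum (fun p : ℕ × ℕ => cc d p.1 p.2 * u ^ p.1 * s p.2) T :=
    ((Equiv.prodComm ℕ ℕ).hasSum_iff).mpr hT
  have hcols : ∀ k : ℕ, HasSum (fun ℓ => cc d k ℓ * u ^ k * s ℓ)
      ((∑ l ∈ Finset.Icc k (2 * k), cc d k l * s l) * u ^ k) := by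
    intro k
    have hfin : ∀ ℓ ∉ Finset.Icc k (2 * k), cc d k ℓ * u ^ k * s ℓ = 0 := by
      intro ℓ hℓ
      simp only [Finset.mem_Icc] at hℓ
      rw [show cc d k ℓ = 0 from by unfold cc; rw [if_neg (by omega)]]
      ring
    have h : HasSum _ _ := hasSum_sum_of_ne_finset_zero hfin
    have : ∑ l ∈ Finset.Icc k (2 * k), cc d k l * u ^ k * s l
        = (∑ l ∈ Finset.Icc k (2 * k), cc d k l * s l) * u ^ k := by
      rw [Finset.sum_mul]
      apply Finset.sum_congr rfl
      intro l _
      ring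
    rwa [this] at h
  have hfinal := hT2.prod_fiberwise hcols
  rwa [hTSF] at hfinal

set_option maxHeartbeats 2000000 in
/-- If `w ∉ ℝ` and the spherical series `Σₙ S_{w,n}(z)·sₙ` converges on the
Cassini ball `{z : |Δ_w(z)| < R²}` (with `R > 0`) to a holomorphic function
`SF`, then for each `n`,
`(1/n!)·SF⁽ⁿ⁾(w) = (2i·Im w)^{−n} · Σ_{ℓ=n}^{2n} e_{2n,ℓ}·(2i·Im w)^ℓ·s_ℓ`. -/
theorem spherical_series_deriv (w : ℂ) (hw : w.im ≠ 0) (R : ℝ) (hR : 0 < R)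
    (s : ℕ → ℂ) (SF : ℂ → ℂ)
    (hconv : ∀ z : ℂ, ‖Delta w z‖ < R ^ 2 →
      HasSum (fun n => Sph w n z * s n) (SF z))
    (hdiff : DifferentiableOn ℂ SF {z : ℂ | ‖Delta w z‖ < R ^ 2})
    (n : ℕ) :
    (1 / (Nat.factorial n : ℂ)) * iteratedDeriv n SF w
      = (2 * Complex.I * (w.im : ℂ)) ^ (-(n : ℤ))
          * ∑ l ∈ Finset.Icc n (2 * n),
              (sphE (2 * n) l : ℂ) * (2 * Complex.I * (w.im : ℂ)) ^ l * s l := by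
  classical
  obtain ⟨ρ, hρ_pos, hkey⟩ := key_hasSum w hw R hR s SF hconv
  set d := w - (starRingEnd ℂ) w with hd
  have hd2 : 2 * Complex.I * (w.im : ℂ) = d := by
    rw [hd, Complex.sub_conj]; push_cast; ring
  have hd0 : d ≠ 0 := by
    rw [← hd2]
    exact mul_ne_zero (mul_ne_zero two_ne_zero Complex.I_ne_zero)
      (Complex.ofReal_ne_zero.mpr hw)
  -- coefficient bound at ρ/2
  have hhalf : ‖((ρ/2 : ℝ) : ℂ)‖ < ρ := by
    rw [Complex.norm_of_nonneg (by positivity)]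
    linarith
  have hS2 := hkey ((ρ/2 : ℝ) : ℂ) hhalf
  obtain ⟨C2, hC2⟩ := (hS2.summable.tendsto_atTop_zero.norm).bddAbove_range
  have hbound : ∀ k : ℕ,
      ‖∑ l ∈ Finset.Icc k (2 * k), cc d k l * s l‖ * (ρ/2) ^ k ≤ C2 := by
    intro k
    have h := hC2 (Set.mem_range_self k)
    simp only [norm_mul, norm_pow, Complex.norm_real, Real.norm_eq_abs,
      abs_of_pos (show (0:ℝ) < ρ/2 by positivity)] at h
    exact h
  set r : NNReal := Real.toNNReal (ρ/2) with hr
  have hr_pos : 0 < r := Real.toNNReal_pos.mpr (by positivity)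
  have hrcoe : (r : ℝ) = ρ/2 := Real.coe_toNNReal _ (by positivity)
  set p : FormalMultilinearSeries ℂ ℂ ℂ :=
    FormalMultilinearSeries.ofScalars ℂ
      (fun k => ∑ l ∈ Finset.Icc k (2 * k), cc d k l * s l) with hp
  have hrad : (r : ENNReal) ≤ p.radius := by
    apply p.le_radius_of_bound C2
    intro k
    rw [hp, FormalMultilinearSeries.ofScalars_norm, hrcoe]
    exact hbound k
  have hball : HasFPowerSeriesOnBall SF p w r := by
    refine ⟨hrad, ENNReal.coe_pos.mpr hr_pos, ?_⟩
    intro y hy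
    rw [mem_emetric_ball_zero_iff, enorm_eq_nnnorm, ENNReal.coe_lt_coe] at hy
    have hy1 : ‖y‖ < ρ/2 := by
      have := (NNReal.coe_lt_coe).mpr hy
      rwa [coe_nnnorm, hrcoe] at this
    have hy' : ‖y‖ < ρ := by
      linarith
    have h := hkey y hy'
    have hfun : (fun n => p n fun _ => y)
        = fun k => (∑ l ∈ Finset.Icc k (2 * k), cc d k l * s l) * y ^ k := by
      funext k
      rw [hp, FormalMultilinearSeries.ofScalars_apply_eq, smul_eq_mul]
    rw [hfun]
    exact h
  have hiter : iteratedDeriv n SF w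
      = (n.factorial : ℂ) * ∑ l ∈ Finset.Icc n (2 * n), cc d n l * s l := by
    have h1 := hball.factorial_smul (1 : ℂ) n
    rw [iteratedFDeriv_apply_eq_iteratedDeriv_mul_prod] at h1
    simp only [Finset.prod_const, one_pow, one_smul] at h1
    rw [hp, FormalMultilinearSeries.ofScalars_apply_eq] at h1
    rw [← h1, one_pow, smul_eq_mul, mul_one, nsmul_eq_mul]
  rw [hiter, hd2, ← mul_assoc, one_div,
    inv_mul_cancel₀ (Nat.cast_ne_zero.mpr n.factorial_ne_zero), one_mul, Finset.mul_sum]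
  apply Finset.sum_congr rfl
  intro l hl
  rw [Finset.mem_Icc] at hl
  have hcc : cc d n l = (sphE (2 * n) l : ℂ) * d ^ (l - n) := by
    have hcond : l / 2 + l % 2 ≤ n ∧ n ≤ l := by omega
    unfold cc
    rw [if_pos hcond]
    congr 1
    have e1 : 2 * n % 2 = 0 := by omega
    have e2 : 2 * n / 2 = n := by omega
    rcases Nat.mod_two_eq_zero_or_one l with h | h
    · simp only [sphE, e1, e2, h, reduceIte, if_pos (show l / 2 ≤ n by omega)]
      norm_num
    · simp only [sphE, e1, e2, h, reduceIte, if_pos (show l / 2 + 1 ≤ n by omega)]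
      norm_num
  have hpow : d ^ (l - n) = d ^ (-(n:ℤ)) * d ^ l := by
    have hz : ((l - n : ℕ) : ℤ) = -(n:ℤ) + l := by omega
    calc d ^ (l - n) = d ^ (((l - n : ℕ) : ℤ)) := (zpow_natCast d _).symm
      _ = d ^ (-(n:ℤ) + l) := by rw [hz]
      _ = d ^ (-(n:ℤ)) * d ^ ((l:ℕ) : ℤ) := zpow_add₀ hd0 _ _
      _ = d ^ (-(n:ℤ)) * d ^ l := by rw [zpow_natCast]
  rw [hcc, hpow]
  ring
end

section
/- Let w ∈ ℂ \ ℝ and let S(z) = Σ_{n∈ℕ} S_{w,n}(z) s_n be a convergent complex spherical series on a Cassini ball around w with positive radius. Define E_{2m} := (1/m!)(2i·Im w)^m S⁽ᵐ⁾(w) and E_{2m+1} := (1/m!)(−2i·Im w)^m S⁽ᵐ⁾(conj(w)). Then the vector ((2i·Im w)ⁿ sₙ)_{n∈ℕ} is the unique solution of the infinite lower-triangular linear system e · x = E, where e is the spherical matrix. In particular, the coefficients sₙ are uniquely determined by the derivatives of S at w and at conj(w). -/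
open Finset Complex
open scoped NNReal ENNReal

lemma summable_pow_half (ρ : ℝ) (h0 : 0 ≤ ρ) (h1 : ρ < 1) :
    Summable (fun n : ℕ => ρ ^ (n / 2)) := by
  have hq0 : 0 ≤ Real.sqrt ρ := Real.sqrt_nonneg ρ
  have hq1 : Real.sqrt ρ < 1 := by
    nlinarith [Real.sq_sqrt h0, Real.sqrt_nonneg ρ]
  have hgeo : Summable (fun n : ℕ => Real.sqrt ρ ^ n) :=
    summable_geometric_of_lt_one hq0 hq1
  have hmaj : Summable (fun n : ℕ => Real.sqrt ρ ^ (n - 1)) :=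
    Summable.comp_nat_add (k := 1) (by simpa using hgeo)
  refine hmaj.of_nonneg_of_le (fun n => pow_nonneg h0 _) (fun n => ?_)
  have : ρ ^ (n / 2) = Real.sqrt ρ ^ (2 * (n / 2)) := by
    rw [pow_mul, Real.sq_sqrt h0]
  rw [this]
  exact pow_le_pow_of_le_one hq0 hq1.le (by omega)

noncomputable def ent (α : ℕ → ℕ) (c : ℂ) (m n : ℕ) : ℂ :=
  if α n ≤ m ∧ m ≤ n then ((n - α n).choose (m - α n) : ℂ) * c ^ (n - m) else 0

lemma key (c : ℂ) (hc : c ≠ 0) (r : ℝ) (hr : 0 < r) (α : ℕ → ℕ)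
    (hα1 : ∀ n, n / 2 ≤ α n) (hα2 : ∀ n, α n ≤ n) (u : ℕ → ℂ) (f : ℂ → ℂ) (x : ℂ)
    (h : ∀ t : ℂ, ‖t * (t + c)‖ < r →
      HasSum (fun n => t ^ α n * (t + c) ^ (n - α n) * u n) (f (x + t))) (m : ℕ) :
    iteratedDeriv m f x
      = (m.factorial : ℂ) * ∑ n ∈ Finset.range (2 * m + 2), ent α c m n * u n := by
  have habsc : 0 < ‖c‖ := by simpa using hc
  set ac := ‖c‖ with hac
  set δ0 : ℝ := min 1 (r / (1 + ac + r)) with hδ0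
  have hδ0pos : 0 < δ0 := by
    apply lt_min one_pos
    positivity
  have hδ0le1 : δ0 ≤ 1 := min_le_left _ _
  have hδ0r : δ0 * (δ0 + ac) < r := by
    have h2 : δ0 ≤ r / (1 + ac + r) := min_le_right _ _
    have h3 : 0 < 1 + ac + r := by positivity
    have h2' := (le_div_iff₀ h3).mp h2
    nlinarith
  -- the test point t0
  set t0 : ℂ := (δ0 : ℂ) * (c / (ac : ℂ)) with ht0
  have habs_t0 : ‖t0‖ = δ0 := by
    rw [ht0, norm_mul, norm_div, Complex.norm_real, Complex.norm_real, Real.norm_eq_abs, Real.norm_eq_abs, ← hac]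
    rw [abs_of_pos hδ0pos, abs_of_pos habsc, div_self (ne_of_gt habsc), mul_one]
  have habs_t0c : ‖t0 + c‖ = δ0 + ac := by
    have : t0 + c = ((δ0 / ac + 1 : ℝ) : ℂ) * c := by
      push_cast
      field_simp [ht0]
      ring
    rw [this, norm_mul, Complex.norm_real, Real.norm_eq_abs, ← hac, abs_of_pos (by positivity)]
    field_simp
  have ht0mem : ‖t0 * (t0 + c)‖ < r := by
    rw [norm_mul, habs_t0, habs_t0c]; exact hδ0r
  -- bound on coefficients
  obtain ⟨B, hB⟩ : ∃ B : ℝ, ∀ n, ‖u n‖ * δ0 ^ n ≤ B := by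
    have hsum := (h t0 ht0mem).summable
    have htend := hsum.tendsto_atTop_zero.norm
    have hbdd := htend.bddAbove_range
    obtain ⟨B, hBmem⟩ := hbdd
    refine ⟨B, fun n => ?_⟩
    have hBn : ‖(t0 ^ α n * (t0 + c) ^ (n - α n) * u n)‖ ≤ B :=
      hBmem (Set.mem_range_self n)
    have hval : ‖t0 ^ α n * (t0 + c) ^ (n - α n) * u n‖
        = δ0 ^ α n * (δ0 + ac) ^ (n - α n) * ‖u n‖ := by
      rw [norm_mul, norm_mul, norm_pow, norm_pow, habs_t0, habs_t0c]
    calc ‖u n‖ * δ0 ^ n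
        = δ0 ^ α n * δ0 ^ (n - α n) * ‖u n‖ := by
          rw [← pow_add]
          rw [Nat.add_sub_cancel' (hα2 n)]
          ring
      _ ≤ δ0 ^ α n * (δ0 + ac) ^ (n - α n) * ‖u n‖ := by
          gcongr
          linarith [habsc]
      _ ≤ B := by rw [← hval]; exact hBn
  have hBnn : 0 ≤ B := le_trans (by positivity) (hB 0)
  set δ : ℝ := δ0 ^ 2 / (δ0 + ac + 1) with hδ
  have hδpos : 0 < δ := by positivity
  have hδltδ0 : δ < δ0 := by
    rw [hδ, div_lt_iff₀ (by positivity)]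
    nlinarith
  -- the power series coefficients
  set A : ℕ → ℂ := fun m => ∑ n ∈ Finset.range (2 * m + 2), ent α c m n * u n with hA
  have main : ∀ t : ℂ, ‖t‖ < δ →
      HasSum (fun m => A m * t ^ m) (f (x + t)) := by
    intro t ht
    set at' : ℝ := ‖t‖ with hat
    have hat0 : 0 ≤ at' := norm_nonneg _
    have hatδ0 : at' < δ0 := lt_trans ht hδltδ0
    have hmem : ‖t * (t + c)‖ < r := by
      have h1 : ‖t * (t + c)‖ ≤ at' * (at' + ac) := by
        rw [norm_mul, ← hat]
        apply mul_le_mul_of_nonneg_left _ hat0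
        calc ‖t + c‖ ≤ ‖t‖ + ‖c‖ := norm_add_le t c
          _ = at' + ac := by rw [← hat, ← hac]
      have h2 : at' * (at' + ac) < δ0 ^ 2 := by
        have : at' * (at' + ac) < δ * (δ0 + ac + 1) := by
          have hl : at' + ac < δ0 + ac + 1 := by linarith
          nlinarith
        rw [hδ] at this
        rw [div_mul_cancel₀] at this
        · exact this
        · positivity
      nlinarith
    set ρ : ℝ := at' * (at' + ac) / δ0 ^ 2 with hρ
    have hρ0 : 0 ≤ ρ := by positivity
    have hρ1 : ρ < 1 := by
      rw [hρ, div_lt_one (by positivity)]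
      have : at' * (at' + ac) < δ * (δ0 + ac + 1) := by
        have hl : at' + ac < δ0 + ac + 1 := by linarith
        nlinarith
      rw [hδ, div_mul_cancel₀ _ (by positivity : (δ0 + ac + 1) ≠ 0)] at this
      exact this
    -- the double-indexed family
    set F : ℕ × ℕ → ℂ := fun p =>
      u p.1 * ((p.1 - α p.1).choose p.2 : ℂ) * c ^ (p.1 - α p.1 - p.2) * t ^ (α p.1 + p.2)
      with hF
    -- rows sum to the original terms
    have hrow : ∀ n : ℕ, HasSum (fun j => F (n, j))
        (t ^ α n * (t + c) ^ (n - α n) * u n) := by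
      intro n
      have hsupp : ∀ j ∉ Finset.range (n - α n + 1), F (n, j) = 0 := by
        intro j hj
        simp only [Finset.mem_range, not_lt] at hj
        have : (n - α n).choose j = 0 := Nat.choose_eq_zero_of_lt (by omega)
        simp [hF, this]
      have := hasSum_sum_of_ne_finset_zero (L := SummationFilter.unconditional _) hsupp
      convert this using 1
      rw [add_pow]
      rw [Finset.mul_sum, Finset.sum_mul]
      apply Finset.sum_congr rfl
      intro j hj
      simp only [Finset.mem_range] at hj
      simp only [hF]
      rw [pow_add]
      push_cast
      ring
    -- norm rows
    have hrownorm : ∀ n : ℕ, HasSum (fun j => ‖F (n, j)‖)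
        (‖u n‖ * (at' ^ α n * (at' + ac) ^ (n - α n))) := by
      intro n
      have hsupp : ∀ j ∉ Finset.range (n - α n + 1), ‖F (n, j)‖ = 0 := by
        intro j hj
        simp only [Finset.mem_range, not_lt] at hj
        have : (n - α n).choose j = 0 := Nat.choose_eq_zero_of_lt (by omega)
        simp [hF, this]
      have := hasSum_sum_of_ne_finset_zero (L := SummationFilter.unconditional _) hsupp
      convert this using 1
      rw [add_pow]
      rw [Finset.mul_sum, Finset.mul_sum]
      apply Finset.sum_congr rfl
      intro j hj
      simp only [Finset.mem_range] at hj
      simp only [hF, norm_mul, norm_pow, Complex.norm_natCast]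
      rw [pow_add, ← hat, ← hac]
      ring
    -- summability of the norms
    have hnormbound : ∀ n : ℕ,
        ‖u n‖ * (at' ^ α n * (at' + ac) ^ (n - α n))
          ≤ (B * max 1 ((at' + ac) / δ0)) * ρ ^ (n / 2) := by
      intro n
      have hδ0n : (0:ℝ) < δ0 ^ n := by positivity
      set q : ℝ := (at' + ac) / δ0 with hq
      have hq0 : 0 ≤ q := by positivity
      have hKq : q ^ (n % 2) ≤ max 1 q := by
        rcases Nat.mod_two_eq_zero_or_one n with hpar | hpar <;> rw [hpar]
        · simpa using le_max_left 1 q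
        · simpa using le_max_right 1 q
      have hu : ‖u n‖ ≤ B / δ0 ^ n := (le_div_iff₀ hδ0n).mpr (hB n)
      have h2 : at' ^ α n * (at' + ac) ^ (n - α n)
          ≤ at' ^ (n / 2) * (at' + ac) ^ (n - n / 2) := by
        have e1 : at' ^ α n = at' ^ (n / 2) * at' ^ (α n - n / 2) := by
          rw [← pow_add]; congr 1; have := hα1 n; omega
        have e2 : (at' + ac) ^ (n - n / 2)
            = (at' + ac) ^ (n - α n) * (at' + ac) ^ (α n - n / 2) := by
          rw [← pow_add]; congr 1; have := hα1 n; have := hα2 n; omega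
        calc at' ^ α n * (at' + ac) ^ (n - α n)
            = at' ^ (n / 2) * (at' + ac) ^ (n - α n) * at' ^ (α n - n / 2) := by
              rw [e1]; ring
          _ ≤ at' ^ (n / 2) * (at' + ac) ^ (n - α n) * (at' + ac) ^ (α n - n / 2) := by
              have h3 : at' ^ (α n - n / 2) ≤ (at' + ac) ^ (α n - n / 2) :=
                pow_le_pow_left₀ hat0 (by linarith) _
              have h4 : (0:ℝ) ≤ at' ^ (n / 2) * (at' + ac) ^ (n - α n) := by positivity
              exact mul_le_mul_of_nonneg_left h3 h4
          _ = at' ^ (n / 2) * (at' + ac) ^ (n - n / 2) := by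
              rw [e2]; ring
      have hrhoq : ρ ^ (n / 2) * q ^ (n % 2)
          = (at' ^ (n / 2) * (at' + ac) ^ (n - n / 2)) / δ0 ^ n := by
        rw [hρ, hq, div_pow, div_pow, div_mul_div_comm]
        congr 1
        · rw [mul_pow]
          have e3 : n - n / 2 = n / 2 + n % 2 := by omega
          rw [e3, pow_add]
          ring
        · rw [← pow_mul, ← pow_add]
          congr 1
          omega
      calc ‖u n‖ * (at' ^ α n * (at' + ac) ^ (n - α n))
          ≤ (B / δ0 ^ n) * (at' ^ (n / 2) * (at' + ac) ^ (n - n / 2)) := by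
            apply mul_le_mul hu h2 (by positivity) (by positivity)
        _ = B * (ρ ^ (n / 2) * q ^ (n % 2)) := by rw [hrhoq]; ring
        _ ≤ B * (max 1 q * ρ ^ (n / 2)) := by
            have : ρ ^ (n / 2) * q ^ (n % 2) ≤ max 1 q * ρ ^ (n / 2) := by
              have := mul_le_mul_of_nonneg_left hKq (pow_nonneg hρ0 (n / 2))
              linarith
            exact mul_le_mul_of_nonneg_left this hBnn
        _ = (B * max 1 q) * ρ ^ (n / 2) := by ring
    have hsummN : Summable (fun n => ‖u n‖ *
        (at' ^ α n * (at' + ac) ^ (n - α n))) := by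
      apply Summable.of_nonneg_of_le (fun n => by positivity) hnormbound
      exact (summable_pow_half ρ hρ0 hρ1).mul_left _
    have hFnormsum : Summable (fun p => ‖F p‖) := by
      rw [summable_prod_of_nonneg (fun p => norm_nonneg _)]
      constructor
      · intro n; exact (hrownorm n).summable
      · apply hsummN.congr
        intro n
        exact ((hrownorm n).tsum_eq).symm
    have hFsum : Summable F := Summable.of_norm hFnormsum
    have hFhassum : HasSum F (f (x + t)) := by
      have h1 : HasSum (fun n => t ^ α n * (t + c) ^ (n - α n) * u n) (∑' p, F p) :=
        hFsum.hasSum.prod_fiberwise hrow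
      rw [← h1.unique (h t hmem)]
      exact hFsum.hasSum
    -- regroup by total degree
    set G' : ℕ × ℕ → ℂ := fun p => ent α c p.1 p.2 * u p.2 * t ^ p.1 with hG'
    have hGsum : HasSum G' (f (x + t)) := by
      rw [← hasSum_iff_hasSum_of_ne_zero_bij
        (f := F) (g := G') (fun p => ((p : ℕ × ℕ).2, (p : ℕ × ℕ).1 - α (p : ℕ × ℕ).2))]
      · exact hFhassum
      · -- injectivity
        rintro ⟨⟨m1, n1⟩, h1⟩ ⟨⟨m2, n2⟩, h2⟩ hpe
        simp only [Prod.mk.injEq] at hpe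
        obtain ⟨hn, hj⟩ := hpe
        have hg1 : α n1 ≤ m1 ∧ m1 ≤ n1 := by
          by_contra hcon
          apply h1
          simp only [hG', ent, if_neg hcon]
          ring
        have hg2 : α n2 ≤ m2 ∧ m2 ≤ n2 := by
          by_contra hcon
          apply h2
          simp only [hG', ent, if_neg hcon]
          ring
        apply Subtype.ext
        simp only [Prod.mk.injEq]
        subst hn
        exact ⟨by omega, rfl⟩
      · -- support of F is covered
        rintro ⟨n, j⟩ hFnj
        simp only [Function.mem_support, hF] at hFnj
        have hj : j ≤ n - α n := by
          by_contra hcon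
          apply hFnj
          rw [Nat.choose_eq_zero_of_lt (by omega)]
          simp
        have hval : G' (α n + j, n) = F (n, j) := by
          simp only [hG', ent, hF]
          rw [if_pos ⟨by omega, by have := hα2 n; omega⟩]
          have e1 : α n + j - α n = j := by omega
          have e2 : n - (α n + j) = n - α n - j := by omega
          rw [e1, e2]
          ring
        refine ⟨⟨(α n + j, n), Function.mem_support.mpr (by rw [hval]; exact hFnj)⟩, ?_⟩
        have e3 : α n + j - α n = j := by omega
        simp [e3]
      · -- values agree
        rintro ⟨⟨m', n⟩, hp⟩
        have hg : α n ≤ m' ∧ m' ≤ n := by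
          by_contra hcon
          apply hp
          simp only [hG', ent, if_neg hcon]
          ring
        simp only [hG', ent, hF, if_pos hg]
        have e1 : n - α n - (m' - α n) = n - m' := by omega
        have e2 : α n + (m' - α n) = m' := by omega
        rw [e1, e2]
        ring
    -- sum the fibers over m
    apply hGsum.prod_fiberwise
    intro m'
    have hsupp : ∀ n ∉ Finset.range (2 * m' + 2), G' (m', n) = 0 := by
      intro n hn
      simp only [Finset.mem_range, not_lt] at hn
      have : ¬ (α n ≤ m' ∧ m' ≤ n) := by
        intro hcon
        have := hα1 n
        omega
      simp only [hG', ent, if_neg this]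
      ring
    have := hasSum_sum_of_ne_finset_zero (L := SummationFilter.unconditional _) hsupp
    convert this using 1
    rw [hA, Finset.sum_mul]
  -- package as a power series
  set p : FormalMultilinearSeries ℂ ℂ ℂ := FormalMultilinearSeries.ofScalars ℂ A with hp
  have hhalf : ‖((δ / 2 : ℝ) : ℂ)‖ < δ := by
    rw [Complex.norm_real, Real.norm_eq_abs, abs_of_pos (by positivity)]; linarith
  obtain ⟨C, hC⟩ : ∃ C : ℝ, ∀ n, ‖A n‖ * (δ / 2) ^ n ≤ C := by
    have hsum := (main ((δ / 2 : ℝ) : ℂ) hhalf).summable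
    obtain ⟨C, hCmem⟩ := hsum.tendsto_atTop_zero.norm.bddAbove_range
    refine ⟨C, fun n => ?_⟩
    have hCn := hCmem (Set.mem_range_self n)
    calc ‖A n‖ * (δ / 2) ^ n = ‖A n * ((δ / 2 : ℝ) : ℂ) ^ n‖ := by
          rw [norm_mul, norm_pow, Complex.norm_real, Real.norm_eq_abs,
            abs_of_pos (by positivity)]
      _ ≤ C := hCn
  have hrad : ENNReal.ofReal (δ / 2) ≤ p.radius := by
    have hb := p.le_radius_of_bound C (r := Real.toNNReal (δ / 2)) ?_
    · exact hb
    · intro n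
      rw [hp, FormalMultilinearSeries.ofScalars_norm]
      have : ((Real.toNNReal (δ / 2) : ℝ≥0) : ℝ) = δ / 2 :=
        Real.coe_toNNReal _ (by positivity)
      rw [this]
      exact hC n
  have hball : HasFPowerSeriesOnBall f p x (ENNReal.ofReal (δ / 2)) := by
    refine ⟨hrad, ?_, ?_⟩
    · rw [ENNReal.ofReal_pos]; positivity
    · intro y hy
      rw [mem_emetric_ball_zero_iff, ← ofReal_norm,
        ENNReal.ofReal_lt_ofReal_iff (by positivity)] at hy
      have hy' : ‖y‖ < δ := by
        linarith
      have hm := main y hy'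
      convert hm using 1
      · rfl
      funext n
      rw [hp, FormalMultilinearSeries.ofScalars_apply_eq, smul_eq_mul]
  have hfact := hball.factorial_smul (1 : ℂ) m
  rw [iteratedDeriv_eq_iteratedFDeriv, ← hfact, hp,
    FormalMultilinearSeries.ofScalars_apply_eq, smul_eq_mul, one_pow, mul_one,
    nsmul_eq_mul, hA]

lemma entry_even (cc : ℂ) (m l : ℕ) :
    (sphE (2*m) l : ℂ) * cc ^ l
      = cc ^ m * ent (fun n => n / 2 + n % 2) cc m l := by
  rcases Nat.even_or_odd l with ⟨k, hk⟩ | ⟨k, hk⟩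
  · have hk' : l = 2*k := by omega
    subst hk'
    have e1 : 2*m % 2 = 0 := by omega
    have e2 : 2*m / 2 = m := by omega
    have e3 : 2*k % 2 = 0 := by omega
    have e4 : 2*k / 2 = k := by omega
    have e6 : 2*k - k = k := by omega
    simp only [sphE, ent, e1, e2, e3, e4, e6, Nat.add_zero, if_true, eq_self_iff_true]
    by_cases h1 : k ≤ m
    · by_cases h2 : m ≤ 2*k
      · rw [if_pos h1, if_pos ⟨h1, h2⟩]
        have e5 : cc ^ (2*k) = cc ^ (2*k - m) * cc ^ m := by
          rw [← pow_add]; congr 1; omega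
        push_cast
        rw [e5]; ring
      · rw [if_pos h1, if_neg (fun hcon : _ ∧ _ => h2 hcon.2),
          Nat.choose_eq_zero_of_lt (by omega)]
        all_goals simp
    · rw [if_neg h1, if_neg (fun hcon => h1 hcon.1)]
      all_goals simp
  · have hk' : l = 2*k+1 := by omega
    subst hk'
    have e1 : 2*m % 2 = 0 := by omega
    have e2 : 2*m / 2 = m := by omega
    have e3 : (2*k+1) % 2 = 1 := by omega
    have e4 : (2*k+1) / 2 = k := by omega
    have e6 : 2*k+1 - (k + 1) = k := by omega
    have e9 : m - (k + 1) = m - k - 1 := by omega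
    simp only [sphE, ent, e1, e2, e3, e4, e6, e9]
    norm_num
    by_cases h1 : k + 1 ≤ m
    · by_cases h2 : m ≤ 2*k+1
      · rw [if_pos (show k < m by omega), if_pos ⟨h1, h2⟩]
        have e5 : cc ^ (2*k+1) = cc ^ (2*k+1 - m) * cc ^ m := by
          rw [← pow_add]; congr 1; omega
        push_cast
        rw [e5]; ring
      · rw [if_pos (show k < m by omega), if_neg (fun hcon : _ ∧ _ => h2 hcon.2),
          Nat.choose_eq_zero_of_lt (by omega)]
        all_goals simp
    · rw [if_neg (show ¬ k < m by omega), if_neg (fun hcon => h1 hcon.1)]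
      all_goals simp

lemma entry_odd (cc : ℂ) (m l : ℕ) :
    (sphE (2*m+1) l : ℂ) * cc ^ l
      = (-cc) ^ m * ent (fun n => n / 2) (-cc) m l := by
  rcases Nat.even_or_odd l with ⟨k, hk⟩ | ⟨k, hk⟩
  · have hk' : l = 2*k := by omega
    subst hk'
    have e1 : (2*m+1) % 2 = 1 := by omega
    have e2 : (2*m+1) / 2 = m := by omega
    have e3 : 2*k % 2 = 0 := by omega
    have e4 : 2*k / 2 = k := by omega
    have e6 : 2*k - k = k := by omega
    simp only [sphE, ent, e1, e2, e3, e4, e6]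
    norm_num
    by_cases h1 : k ≤ m
    · by_cases h2 : m ≤ 2*k
      · rw [if_pos h1, if_pos ⟨h1, h2⟩]
        have e5 : (-cc) ^ m * (-cc) ^ (2*k - m) = cc ^ (2*k) := by
          rw [← pow_add, show m + (2*k - m) = 2*k from by omega,
            Even.neg_pow (even_two_mul k)]
        push_cast
        linear_combination (-(k.choose (m - k) : ℂ)) * e5
      · rw [if_pos h1, if_neg (fun hcon : _ ∧ _ => h2 hcon.2),
          Nat.choose_eq_zero_of_lt (by omega)]
        all_goals simp
    · rw [if_neg h1, if_neg (fun hcon => h1 hcon.1)]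
      all_goals simp
  · have hk' : l = 2*k+1 := by omega
    subst hk'
    have e1 : (2*m+1) % 2 = 1 := by omega
    have e2 : (2*m+1) / 2 = m := by omega
    have e3 : (2*k+1) % 2 = 1 := by omega
    have e4 : (2*k+1) / 2 = k := by omega
    have e6 : 2*k+1 - k = k + 1 := by omega
    simp only [sphE, ent, e1, e2, e3, e4, e6]
    norm_num
    by_cases h1 : k ≤ m
    · by_cases h2 : m ≤ 2*k+1
      · rw [if_pos h1, if_pos ⟨h1, h2⟩]
        have e5 : (-cc) ^ m * (-cc) ^ (2*k+1 - m) = -(cc ^ (2*k+1)) := by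
          rw [← pow_add, show m + (2*k+1 - m) = 2*k+1 from by omega,
            Odd.neg_pow ⟨k, by ring⟩]
        push_cast
        linear_combination (-((k + 1).choose (m - k) : ℂ)) * e5
      · rw [if_pos h1, if_neg (fun hcon : _ ∧ _ => h2 hcon.2),
          Nat.choose_eq_zero_of_lt (by omega)]
        all_goals simp
    · rw [if_neg h1, if_neg (fun hcon => h1 hcon.1)]
      all_goals simp

lemma sphE_diag (n : ℕ) : (sphE n n : ℂ) ≠ 0 := by
  rcases Nat.even_or_odd n with ⟨m, hm⟩ | ⟨m, hm⟩
  · have hk' : n = 2*m := by omega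
    subst hk'
    have e1 : 2*m % 2 = 0 := by omega
    have e2 : 2*m / 2 = m := by omega
    have : sphE (2*m) (2*m) = 1 := by
      simp [sphE, e1, e2]
    rw [this]
    norm_num
  · have hk' : n = 2*m+1 := by omega
    subst hk'
    have e1 : (2*m+1) % 2 = 1 := by omega
    have e2 : (2*m+1) / 2 = m := by omega
    have : sphE (2*m+1) (2*m+1) = -1 := by
      simp [sphE, e1, e2]
    rw [this]
    norm_num

/-- If `w ∉ ℝ` and the spherical series `Σₙ S_{w,n}(z)·sₙ` converges on a
Cassini ball of positive radius around `w` to a holomorphic function `SF`,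
define `E_{2m} := (1/m!)(2i·Im w)^m·SF⁽ᵐ⁾(w)` and
`E_{2m+1} := (1/m!)(−2i·Im w)^m·SF⁽ᵐ⁾(conj w)`.  Then
`(（2i·Im w)ⁿ·sₙ)ₙ` is the unique solution of the infinite lower-triangular
system `e·x = E` (the `n`-th equation being `Σ_{ℓ≤n} e_{n,ℓ} x_ℓ = E_n`). -/
theorem spherical_series_coefficients (w : ℂ) (hw : w.im ≠ 0) (R : ℝ) (hR : 0 < R)
    (s : ℕ → ℂ) (SF : ℂ → ℂ)
    (hconv : ∀ z : ℂ, ‖Delta w z‖ < R ^ 2 →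
      HasSum (fun n => Sph w n z * s n) (SF z))
    (hdiff : DifferentiableOn ℂ SF {z : ℂ | ‖Delta w z‖ < R ^ 2})
    (E : ℕ → ℂ)
    (hE : ∀ m : ℕ,
      E (2 * m) = (1 / (Nat.factorial m : ℂ)) * (2 * Complex.I * (w.im : ℂ)) ^ m
          * iteratedDeriv m SF w ∧
      E (2 * m + 1) = (1 / (Nat.factorial m : ℂ)) * (-(2 * Complex.I * (w.im : ℂ))) ^ m
          * iteratedDeriv m SF ((starRingEnd ℂ) w)) :
    (∀ n : ℕ, ∑ l ∈ Finset.range (n + 1),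
        (sphE n l : ℂ) * ((2 * Complex.I * (w.im : ℂ)) ^ l * s l) = E n) ∧
    (∀ x : ℕ → ℂ,
      (∀ n : ℕ, ∑ l ∈ Finset.range (n + 1), (sphE n l : ℂ) * x l = E n) →
      x = fun n => (2 * Complex.I * (w.im : ℂ)) ^ n * s n) := by
  set cc : ℂ := 2 * Complex.I * (w.im : ℂ) with hccdef
  have hcc0 : cc ≠ 0 := by
    rw [hccdef]
    exact mul_ne_zero (mul_ne_zero two_ne_zero Complex.I_ne_zero)
      (by exact_mod_cast hw)
  have hconjw : (starRingEnd ℂ) w = w - cc := by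
    have h := Complex.sub_conj w
    have h2 : ((2 * w.im : ℝ) : ℂ) * Complex.I = cc := by
      rw [hccdef]; push_cast; ring
    rw [h2] at h
    linear_combination -h
  have hR2 : (0:ℝ) < R ^ 2 := by positivity
  -- the series at w
  have hserA : ∀ t : ℂ, ‖t * (t + cc)‖ < R ^ 2 →
      HasSum (fun n => t ^ (n / 2 + n % 2) * (t + cc) ^ (n - (n / 2 + n % 2)) * s n)
        (SF (w + t)) := by
    intro t ht
    have hD : Delta w (w + t) = t * (t + cc) := by
      rw [Delta, hconjw]; ring
    have hz := hconv (w + t) (by rw [hD]; exact ht)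
    convert hz using 1
    funext n
    rw [Sph, hD, show w + t - w = t from by ring]
    rcases Nat.mod_two_eq_zero_or_one n with hpar | hpar
    · rw [hpar]
      have e1 : n - (n / 2 + 0) = n / 2 := by omega
      rw [e1, if_neg (by norm_num : ¬(0:ℕ) = 1), mul_pow]
      ring
    · rw [hpar]
      have e1 : n - (n / 2 + 1) = n / 2 := by omega
      rw [e1, if_pos rfl, mul_pow, pow_succ]
      ring
  have hserB : ∀ t : ℂ, ‖t * (t + -cc)‖ < R ^ 2 →
      HasSum (fun n => t ^ (n / 2) * (t + -cc) ^ (n - n / 2) * s n)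
        (SF ((starRingEnd ℂ) w + t)) := by
    intro t ht
    have hD : Delta w ((starRingEnd ℂ) w + t) = t * (t + -cc) := by
      rw [Delta, hconjw]; ring
    have hz := hconv ((starRingEnd ℂ) w + t) (by rw [hD]; exact ht)
    convert hz using 1
    funext n
    rw [Sph, hD, hconjw, show w - cc + t - w = t + -cc from by ring]
    rcases Nat.mod_two_eq_zero_or_one n with hpar | hpar
    · rw [hpar]
      have e1 : n - n / 2 = n / 2 := by omega
      rw [e1, if_neg (by norm_num : ¬(0:ℕ) = 1), mul_pow]
      ring
    · rw [hpar]
      have e1 : n - n / 2 = n / 2 + 1 := by omega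
      rw [e1, if_pos rfl, mul_pow, pow_succ]
      ring
  have hDerA : ∀ m : ℕ, iteratedDeriv m SF w
      = (m.factorial : ℂ) * ∑ n ∈ Finset.range (2 * m + 2),
          ent (fun n => n / 2 + n % 2) cc m n * s n :=
    fun m => key cc hcc0 (R ^ 2) hR2 (fun n => n / 2 + n % 2)
      (fun n => by show n / 2 ≤ n / 2 + n % 2; omega)
      (fun n => by show n / 2 + n % 2 ≤ n; omega) s SF w hserA m
  have hDerB : ∀ m : ℕ, iteratedDeriv m SF ((starRingEnd ℂ) w)
      = (m.factorial : ℂ) * ∑ n ∈ Finset.range (2 * m + 2),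
          ent (fun n => n / 2) (-cc) m n * s n :=
    fun m => key (-cc) (neg_ne_zero.mpr hcc0) (R ^ 2) hR2 (fun n => n / 2)
      (fun n => le_refl _)
      (fun n => by show n / 2 ≤ n; omega) s SF ((starRingEnd ℂ) w) hserB m
  have hfac : ∀ m : ℕ, (m.factorial : ℂ) ≠ 0 :=
    fun m => Nat.cast_ne_zero.mpr m.factorial_ne_zero
  have hpart1 : ∀ n : ℕ, ∑ l ∈ Finset.range (n + 1),
      (sphE n l : ℂ) * (cc ^ l * s l) = E n := by
    intro n
    rcases Nat.even_or_odd n with ⟨m, hm⟩ | ⟨m, hm⟩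
    · have hk' : n = 2*m := by omega
      subst hk'
      calc ∑ l ∈ Finset.range (2*m + 1), (sphE (2*m) l : ℂ) * (cc ^ l * s l)
          = ∑ l ∈ Finset.range (2*m + 1),
              cc ^ m * (ent (fun n => n / 2 + n % 2) cc m l * s l) := by
            refine Finset.sum_congr rfl fun l _ => ?_
            rw [← mul_assoc, entry_even, mul_assoc]
        _ = ∑ l ∈ Finset.range (2*m + 2),
              cc ^ m * (ent (fun n => n / 2 + n % 2) cc m l * s l) := by
            have hz : ent (fun n => n / 2 + n % 2) cc m (2*m+1) = 0 := by
              rw [ent, if_neg]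
              intro hcon
              omega
            rw [show (2*m+2) = (2*m+1)+1 from rfl,
              Finset.sum_range_succ
                (f := fun l => cc ^ m * (ent (fun n => n / 2 + n % 2) cc m l * s l))
                (n := 2*m+1), hz]
            ring
        _ = cc ^ m * ∑ l ∈ Finset.range (2*m + 2),
              ent (fun n => n / 2 + n % 2) cc m l * s l := by
            rw [Finset.mul_sum]
        _ = E (2*m) := by
            rw [(hE m).1, hDerA m]
            field_simp [hfac m]
    · have hk' : n = 2*m+1 := by omega
      subst hk'
      calc ∑ l ∈ Finset.range (2*m+1 + 1), (sphE (2*m+1) l : ℂ) * (cc ^ l * s l)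
          = ∑ l ∈ Finset.range (2*m + 2),
              (-cc) ^ m * (ent (fun n => n / 2) (-cc) m l * s l) := by
            refine Finset.sum_congr rfl fun l _ => ?_
            rw [← mul_assoc, entry_odd, mul_assoc]
        _ = (-cc) ^ m * ∑ l ∈ Finset.range (2*m + 2),
              ent (fun n => n / 2) (-cc) m l * s l := by
            rw [Finset.mul_sum]
        _ = E (2*m+1) := by
            rw [(hE m).2, hDerB m]
            field_simp [hfac m]
  refine ⟨hpart1, fun x hx => funext fun n => ?_⟩
  induction n using Nat.strong_induction_on with
  | _ n ih =>
    have h1 := hpart1 n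
    have h2 := hx n
    have h3 : ∑ l ∈ Finset.range (n+1), (sphE n l : ℂ) * (x l - cc ^ l * s l) = 0 := by
      have hs : ∑ l ∈ Finset.range (n+1),
          ((sphE n l : ℂ) * x l - (sphE n l : ℂ) * (cc ^ l * s l)) = 0 := by
        rw [Finset.sum_sub_distrib, h2, h1, sub_self]
      rw [← hs]
      exact Finset.sum_congr rfl fun l _ => by ring
    rw [Finset.sum_range_succ] at h3
    have h4 : ∑ l ∈ Finset.range n, (sphE n l : ℂ) * (x l - cc ^ l * s l) = 0 := by
      apply Finset.sum_eq_zero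
      intro l hl
      have := ih l (Finset.mem_range.mp hl)
      rw [this]
      ring
    rw [h4, zero_add] at h3
    have h6 : x n - cc ^ n * s n = 0 := by
      rcases mul_eq_zero.mp h3 with hcase | hcase
      · exact absurd hcase (sphE_diag n)
      · exact hcase
    show x n = cc ^ n * s n
    exact sub_eq_zero.mp h6
end
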